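/- Let 0 < p < 1/2 and q = 1 − p. Let R_k(z) be the polynomials defined by R_{−1}(z) = 1, R_0(z) = 1 − q z, and R_k(z) = R_{k−1}(z) − p q z² R_{k−2}(z) for k ≥ 1. Then for every real z with 0 < z < 1/(2√(pq)), setting t = √(1 − 4 p q z²), u = ((1+t)/2)(1 + t − √(q/p)·√(1 − t²)) and v = ((1−t)/2)(−1 + t + √(q/p)·√(1 − t²)), one has for all k ≥ −1: R_k(z) = (1/(2t)) [ u ((1+t)/2)^k + v ((1−t)/2)^k ]. -/

import Mathlib

/-- Index-shifted denominator polynomials for the weak scenario: `Rwrec p z (k+1)`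
is the quantity `R_k(z)` of the paper, so `R_{-1}(z) = 1`, `R_0(z) = 1 - (1-p) z`,
and `R_k(z) = R_{k-1}(z) - p (1-p) z² R_{k-2}(z)` for `k ≥ 1`. -/
noncomputable def Rwrec (p z : ℝ) : ℕ → ℝ
  | 0 => 1
  | 1 => 1 - (1 - p) * z
  | (k + 2) => Rwrec p z (k + 1) - p * (1 - p) * z ^ 2 * Rwrec p z k

/-- Explicit solution of the weak-scenario recurrence: with `t = √(1 - 4 p q z²)`,
`u = ((1+t)/2)(1 + t - √(q/p)√(1-t²))`, `v = ((1-t)/2)(-1 + t + √(q/p)√(1-t²))`,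
`R_k(z) = (1/(2t)) [u ((1+t)/2)^k + v ((1-t)/2)^k]` for all `k ≥ -1`. -/
theorem weak_R_closed_form (p q : ℝ) (hp0 : 0 < p) (hp : p < 1 / 2) (hq : q = 1 - p)
    (z : ℝ) (hz0 : 0 < z) (hz1 : z < 1 / (2 * Real.sqrt (p * q)))
    (t u v : ℝ) (ht : t = Real.sqrt (1 - 4 * p * q * z ^ 2))
    (hu : u = (1 + t) / 2 * (1 + t - Real.sqrt (q / p) * Real.sqrt (1 - t ^ 2)))
    (hv : v = (1 - t) / 2 * (-1 + t + Real.sqrt (q / p) * Real.sqrt (1 - t ^ 2))) :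
    ∀ k : ℤ, -1 ≤ k →
      Rwrec p z (k + 1).toNat =
        1 / (2 * t) * (u * ((1 + t) / 2) ^ k + v * ((1 - t) / 2) ^ k) := by
  have hq0 : 0 < q := by rw [hq]; linarith
  have hpq : 0 < p * q := mul_pos hp0 hq0
  have hsq : 0 < Real.sqrt (p * q) := Real.sqrt_pos.mpr hpq
  have hz2 : 4 * p * q * z ^ 2 < 1 := by
    have h : z * (2 * Real.sqrt (p * q)) < 1 := by
      rw [lt_div_iff₀ (by positivity)] at hz1; linarith
    have hx : 0 < z * (2 * Real.sqrt (p * q)) := by positivity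
    have hx2 : (z * (2 * Real.sqrt (p * q))) ^ 2 < 1 := by nlinarith
    nlinarith [Real.sq_sqrt hpq.le]
  have hpqz : 0 < p * q * z ^ 2 := by positivity
  have ht0 : 0 < t := by rw [ht]; apply Real.sqrt_pos.mpr; nlinarith
  have ht2 : t ^ 2 = 1 - 4 * p * q * z ^ 2 := by
    rw [ht, Real.sq_sqrt]; linarith
  have ht1 : t < 1 := by nlinarith
  have hs2 : Real.sqrt (q / p) * Real.sqrt (1 - t ^ 2) = 2 * q * z := by
    have h1 : (0:ℝ) ≤ q / p := by positivity
    have h2 : 1 - t ^ 2 = 4 * p * q * z ^ 2 := by linarith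
    have h3 : q / p * (4 * p * q * z ^ 2) = (2 * q * z) ^ 2 := by
      field_simp; ring
    rw [h2, ← Real.sqrt_mul h1, h3, Real.sqrt_sq (by positivity)]
  have huc : u = (1 + t) / 2 * (1 + t - 2 * q * z) := by rw [hu, hs2]
  have hvc : v = (1 - t) / 2 * (-1 + t + 2 * q * z) := by rw [hv, hs2]
  have ha0 : (1 + t) / 2 ≠ 0 := by positivity
  have hb0 : (1 - t) / 2 ≠ 0 := by
    have : 0 < (1 - t) / 2 := by linarith
    exact this.ne'
  have haa : ((1 + t) / 2) ^ 2 = (1 + t) / 2 - p * q * z ^ 2 := by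
    linear_combination ht2 / 4
  have hbb : ((1 - t) / 2) ^ 2 = (1 - t) / 2 - p * q * z ^ 2 := by
    linear_combination ht2 / 4
  have key : ∀ n : ℕ, Rwrec p z n =
      1 / (2 * t) * ((1 + t - 2 * q * z) * ((1 + t) / 2) ^ n
        + (-1 + t + 2 * q * z) * ((1 - t) / 2) ^ n) := by
    intro n
    induction n using Nat.twoStepInduction with
    | zero =>
      show (1:ℝ) = _
      field_simp
      ring
    | one =>
      show (1:ℝ) - (1 - p) * z = _
      rw [hq] at *
      field_simp
      ring
    | more n ih1 ih2 =>
      show Rwrec p z (n + 1) - p * (1 - p) * z ^ 2 * Rwrec p z n = _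
      rw [ih1, ih2, ← hq]
      have e1 : ((1 + t) / 2) ^ (n + 2) =
          ((1 + t) / 2) ^ n * ((1 + t) / 2 - p * q * z ^ 2) := by
        rw [pow_add, haa]
      have e2 : ((1 - t) / 2) ^ (n + 2) =
          ((1 - t) / 2) ^ n * ((1 - t) / 2 - p * q * z ^ 2) := by
        rw [pow_add, hbb]
      rw [e1, e2, pow_succ, pow_succ]
      ring
  intro k hk
  set n : ℕ := (k + 1).toNat with hn
  have hkn : (n : ℤ) = k + 1 := Int.toNat_of_nonneg (by linarith)
  have hk' : k = (n : ℤ) - 1 := by omega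
  rw [hk', key n, huc, hvc]
  have cancel : ∀ (x cc w : ℝ), x ≠ 0 → x * cc * (w / x) = cc * w := by
    intro x cc w hx; field_simp
  rw [zpow_sub₀ ha0, zpow_sub₀ hb0, zpow_natCast, zpow_natCast, zpow_one, zpow_one,
    cancel _ _ _ ha0, cancel _ _ _ hb0]
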